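/- Let ω : ℝ → ℝ be a weight on the additive group ℝ (i.e., ω is continuous, positive, and ω(s+t) ≤ ω(s)ω(t) for all s,t). If liminf_{t→∞} ω(t)ω(−t)/t = 0, then for every t₀ > 0 one has liminf_{n→∞} ω(n t₀)ω(−n t₀)/n = 0. -/

import Mathlib

/-- If ω is a weight on (ℝ,+) with liminf_{t→∞} ω(t)ω(−t)/t = 0,
then for every t₀ > 0, liminf_{n→∞} ω(n t₀)ω(−n t₀)/n = 0. -/
theorem stmt0 (ω : ℝ → ℝ) (hcont : Continuous ω) (hpos : ∀ t, 0 < ω t)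
    (hsub : ∀ s t, ω (s + t) ≤ ω s * ω t)
    (h : ∀ ε > (0:ℝ), ∀ M > (0:ℝ), ∃ t > M, ω t * ω (-t) / t < ε) :
    ∀ t₀ > (0:ℝ), ∀ ε > (0:ℝ), ∀ M : ℕ, ∃ n : ℕ, n > M ∧
      ω (n * t₀) * ω (-(n * t₀)) / n < ε := by
  intro t₀ ht₀ ε hε M
  -- bound Ω(r) = ω r * ω (-r) on [0, t₀] by C
  obtain ⟨c, hc_mem, hc_max⟩ := (isCompact_Icc (a := (0:ℝ)) (b := t₀)).exists_isMaxOn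
    (Set.nonempty_Icc.mpr (le_of_lt ht₀))
    ((hcont.mul (hcont.comp continuous_neg)).continuousOn)
  set C : ℝ := ω c * ω (-c) with hC
  have hCpos : 0 < C := mul_pos (hpos c) (hpos (-c))
  have hCbound : ∀ r ∈ Set.Icc (0:ℝ) t₀, ω r * ω (-r) ≤ C := fun r hr => hc_max hr
  -- apply hypothesis with ε' and M'
  have hε' : (0:ℝ) < ε / (2 * C * t₀) := by positivity
  have hM' : (0:ℝ) < max (2 * t₀) ((M + 2) * t₀) := lt_max_of_lt_left (by linarith)
  obtain ⟨t, ht, hlt⟩ := h _ hε' _ hM'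
  have ht2 : 2 * t₀ < t := lt_of_le_of_lt (le_max_left _ _) ht
  have htM : (M + 2) * t₀ < t := lt_of_le_of_lt (le_max_right _ _) ht
  have htpos : 0 < t := by linarith
  set n : ℕ := ⌊t / t₀⌋₊ with hn
  have hdiv : (M:ℝ) + 2 < t / t₀ := by
    rw [lt_div_iff₀ ht₀]; linarith
  have hnM : n > M + 1 := by
    have : (M + 2 : ℕ) ≤ n := Nat.le_floor (by push_cast; linarith)
    omega
  have hnpos : 0 < n := by omega
  have hnlb : t / (2 * t₀) < (n:ℝ) := by
    have h1 : t / t₀ - 1 < (n:ℝ) := Nat.sub_one_lt_floor _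
    have h2 : t / (2 * t₀) ≤ t / t₀ - 1 := by
      have e : t / t₀ - t / (2 * t₀) = t / (2 * t₀) := by field_simp; ring
      have h3 : 1 ≤ t / (2 * t₀) := by
        rw [le_div_iff₀ (by linarith : (0:ℝ) < 2 * t₀)]; linarith
      linarith
    linarith
  have hnub : (n:ℝ) * t₀ ≤ t := by
    have := Nat.floor_le (by positivity : (0:ℝ) ≤ t / t₀)
    calc (n:ℝ) * t₀ ≤ (t / t₀) * t₀ := by
          apply mul_le_mul_of_nonneg_right this (le_of_lt ht₀)
      _ = t := div_mul_cancel₀ t (ne_of_gt ht₀)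
  -- r := t - n t₀ ∈ [0, t₀]
  set r : ℝ := t - n * t₀ with hr
  have hr_mem : r ∈ Set.Icc (0:ℝ) t₀ := by
    have h4 : t / t₀ < n + 1 := Nat.lt_floor_add_one _
    have h5 : t < (n + 1) * t₀ := by
      rw [div_lt_iff₀ ht₀] at h4; push_cast at h4 ⊢; linarith
    constructor
    · simp only [hr, sub_nonneg]; exact hnub
    · simp only [hr]; push_cast at h5; linarith
  have key1 : ω ((n:ℝ) * t₀) ≤ ω t * ω (-r) := by
    have := hsub t (-r)
    have e : t + -r = (n:ℝ) * t₀ := by rw [hr]; ring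
    rwa [e] at this
  have key2 : ω (-((n:ℝ) * t₀)) ≤ ω (-t) * ω r := by
    have := hsub (-t) r
    have e : -t + r = -((n:ℝ) * t₀) := by rw [hr]; ring
    rwa [e] at this
  have keyΩ : ω ((n:ℝ) * t₀) * ω (-((n:ℝ) * t₀)) ≤ (ω t * ω (-t)) * C := by
    calc ω ((n:ℝ) * t₀) * ω (-((n:ℝ) * t₀))
        ≤ (ω t * ω (-r)) * (ω (-t) * ω r) := by
          apply mul_le_mul key1 key2 (le_of_lt (hpos _)) (mul_pos (hpos _) (hpos _)).le
      _ = (ω t * ω (-t)) * (ω r * ω (-r)) := by ring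
      _ ≤ (ω t * ω (-t)) * C := by
          apply mul_le_mul_of_nonneg_left (hCbound r hr_mem) (mul_pos (hpos _) (hpos _)).le
  refine ⟨n, by omega, ?_⟩
  -- from hlt: ω t * ω (-t) < ε/(2 C t₀) * t
  have hΩt : ω t * ω (-t) < ε / (2 * C * t₀) * t := by
    rw [div_lt_iff₀ htpos] at hlt; linarith
  rw [div_lt_iff₀ (by exact_mod_cast hnpos : (0:ℝ) < (n:ℕ))]
  have h1 : ω ((n:ℝ) * t₀) * ω (-((n:ℝ) * t₀)) < ε / (2 * C * t₀) * t * C := by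
    calc ω ((n:ℝ) * t₀) * ω (-((n:ℝ) * t₀)) ≤ (ω t * ω (-t)) * C := keyΩ
      _ < ε / (2 * C * t₀) * t * C := by
          exact mul_lt_mul_of_pos_right hΩt hCpos
  have he : ε / (2 * C * t₀) * t * C = ε * (t / (2 * t₀)) := by
    field_simp
  have h2 : ε * (t / (2 * t₀)) < ε * n := mul_lt_mul_of_pos_left hnlb hε
  calc ω ((n:ℝ) * t₀) * ω (-((n:ℝ) * t₀)) < ε * (t / (2 * t₀)) := by rw [← he]; exact h1
    _ < ε * n := h2
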